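/- Let (W_n)_{n≥0} be an odometer based construction sequence with limit K and let ρ be a shift-invariant Borel probability measure on K. Then for every n and every word w ∈ W_n, the cylinder ⟨w⟩ satisfies 1/K_{n+1} ≤ ρ(⟨w⟩) ≤ f_n / K_n, where f_n is the maximal frequency of n-words in (n+1)-words. -/

import Mathlib

open MeasureTheory

namespace OdoPaper

/-- The shift map `sh` on bi-infinite sequences: `(sh x)(n) = x(n+1)`. -/
def shift {σ : Type*} (x : ℤ → σ) : ℤ → σ := fun m => x (m + 1)

/-- The `n`-th iterate (`n : ℤ`) of the shift map: `(shiftZ n x)(m) = x(m+n)`. -/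
def shiftZ {σ : Type*} (n : ℤ) (x : ℤ → σ) : ℤ → σ := fun m => x (m + n)

/-- `Kseq k n = K_n`, where `K_0 = 1` and `K_{n+1} = K_n * k_n`. -/
def Kseq (k : ℕ → ℕ) : ℕ → ℕ
  | 0 => 1
  | n + 1 => Kseq k n * k n

/-- `w` occurs as a contiguous subword of `l` starting at position `p`. -/
def occursAt {σ : Type*} (w l : List σ) (p : ℕ) : Prop :=
  p + w.length ≤ l.length ∧ (l.drop p).take w.length = w

/-- The finite contiguous subword `x↾[a, a+m)` of `x : ℤ → σ`. -/
def subwordAt {σ : Type*} (x : ℤ → σ) (a : ℤ) (m : ℕ) : List σ :=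
  List.ofFn (fun i : Fin m => x (a + i))

/-- The limit `K` of a construction sequence: all bi-infinite sequences each of whose finite
contiguous subwords occurs as a contiguous subword of some word in some `W n`. -/
def CSLimit {σ : Type*} (W : ℕ → Set (List σ)) : Set (ℤ → σ) :=
  { x | ∀ (a : ℤ) (m : ℕ), ∃ n, ∃ w ∈ W n, ∃ p, occursAt (subwordAt x a m) w p }

/-- `(W_n)` is an odometer based construction sequence over the finite alphabet `σ` with
coefficient sequence `k`:  `W 0` consists of the one-letter words; every word of `W n` has
length `K_n`; every word of `W (n+1)` is a concatenation of `k n` words from `W n`; each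
`W n` is uniquely readable; and every `n`-word occurs in every `(n+1)`-word. -/
structure OdometerBasedCS (σ : Type*) [Fintype σ] (k : ℕ → ℕ) (W : ℕ → Set (List σ)) :
    Prop where
  two_le : ∀ n, 2 ≤ k n
  w_zero : W 0 = { l : List σ | ∃ a : σ, l = [a] }
  nonempty : ∀ n, (W n).Nonempty
  finite : ∀ n, (W n).Finite
  length_eq : ∀ n, ∀ w ∈ W n, w.length = Kseq k n
  concat : ∀ n, ∀ w' ∈ W (n + 1),
    ∃ g : Fin (k n) → List σ, (∀ i, g i ∈ W n) ∧ w' = (List.ofFn g).flatten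
  unique_readable : ∀ n, ∀ u ∈ W n, ∀ v ∈ W n, ∀ w ∈ W n, ∀ p,
    occursAt w (u ++ v) p → p = 0 ∨ p = Kseq k n
  subword : ∀ n, ∀ w ∈ W n, ∀ w' ∈ W (n + 1), ∃ p, occursAt w w' p

/-- The number of occurrences of `w` as a contiguous subword of `l`. -/
noncomputable def occCount {σ : Type*} (w l : List σ) : ℕ :=
  Nat.card { p : ℕ // occursAt w l p }

/-- `Freq k n m w w'` : the number of occurrences of the `n`-word `w` in the `m`-word `w'`
divided by `K_m / K_n`. -/
noncomputable def Freq {σ : Type*} (k : ℕ → ℕ) (n m : ℕ) (w w' : List σ) : ℝ :=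
  (occCount w w' : ℝ) / ((Kseq k m : ℝ) / (Kseq k n : ℝ))

/-- `f_n` : the maximal frequency of `n`-words in `(n+1)`-words. -/
noncomputable def maxFreq {σ : Type*} (k : ℕ → ℕ) (W : ℕ → Set (List σ)) (n : ℕ) : ℝ :=
  sSup { r : ℝ | ∃ w ∈ W n, ∃ w' ∈ W (n + 1), r = Freq k n (n + 1) w w' }

/-- The cylinder `⟨w⟩` determined by an `n`-word `w`: those `x` in the limit `K` whose
parsing into `n`-words has offset `a = 0` and whose principal `n`-subword `x↾[0,K_n)` is `w`. -/
def cylinder {σ : Type*} (W : ℕ → Set (List σ)) (k : ℕ → ℕ) (n : ℕ) (w : List σ) :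
    Set (ℤ → σ) :=
  { x | x ∈ CSLimit W ∧ (∀ j : ℤ, subwordAt x (j * (Kseq k n : ℤ)) (Kseq k n) ∈ W n) ∧
        subwordAt x 0 (Kseq k n) = w }


section Aux
variable {σ : Type*}

@[simp] lemma subword_length (x : ℤ → σ) (a : ℤ) (m : ℕ) : (subwordAt x a m).length = m := by
  simp [subwordAt]

lemma subword_getElem (x : ℤ → σ) (a : ℤ) (m : ℕ) (i : ℕ) (h : i < (subwordAt x a m).length) :
    (subwordAt x a m)[i] = x (a + i) := by
  simp [subwordAt]

lemma subword_drop_take (x : ℤ → σ) (a : ℤ) (m : ℕ) (d L : ℕ) (h : d + L ≤ m) :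
    ((subwordAt x a m).drop d).take L = subwordAt x (a + d) L := by
  apply List.ext_getElem
  · simp; omega
  · intro i h1 h2
    simp only [List.getElem_take, List.getElem_drop]
    rw [subword_getElem _ _ _ _ (by simp at h1 ⊢; omega), subword_getElem _ _ _ _ (by simpa using h2)]
    congr 1; push_cast; ring

lemma subword_append (x : ℤ → σ) (a : ℤ) (m₁ m₂ : ℕ) :
    subwordAt x a (m₁ + m₂) = subwordAt x a m₁ ++ subwordAt x (a + m₁) m₂ := by
  apply List.ext_getElem
  · simp
  · intro i h1 h2
    rw [subword_getElem]
    rcases lt_or_ge i m₁ with h | h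
    · rw [List.getElem_append_left (by simpa using h), subword_getElem]
    · rw [List.getElem_append_right (by simpa using h),
        subword_getElem _ _ _ _ (by simp at h1 ⊢; omega)]
      congr 1; simp; push_cast; omega

lemma occursAt_subword (x : ℤ → σ) (a : ℤ) (m d L : ℕ) (h : d + L ≤ m) :
    occursAt (subwordAt x (a + d) L) (subwordAt x a m) d := by
  constructor
  · simp; omega
  · rw [subword_length, subword_drop_take x a m d L h]

lemma subword_shiftZ (x : ℤ → σ) (c a : ℤ) (m : ℕ) :
    subwordAt (shiftZ c x) a m = subwordAt x (a + c) m := by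
  apply List.ext_getElem <;> simp [subwordAt, shiftZ]
  intros; ring_nf


lemma Kseq_pos {k : ℕ → ℕ} (h2 : ∀ n, 2 ≤ k n) (n : ℕ) : 0 < Kseq k n := by
  induction n with
  | zero => simp [Kseq]
  | succ n ih =>
    have h := h2 n
    exact Nat.mul_pos ih (by omega)

lemma Kseq_succ (k : ℕ → ℕ) (n : ℕ) : Kseq k (n+1) = Kseq k n * k n := rfl

lemma Kseq_lt_succ {k : ℕ → ℕ} (h2 : ∀ n, 2 ≤ k n) (n : ℕ) : Kseq k n < Kseq k (n+1) := by
  have h := Kseq_pos h2 n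
  have := h2 n
  calc Kseq k n < Kseq k n * 2 := by omega
  _ ≤ Kseq k n * k n := Nat.mul_le_mul_left _ this
  _ = Kseq k (n+1) := rfl

lemma Kseq_mono {k : ℕ → ℕ} (h2 : ∀ n, 2 ≤ k n) {n m : ℕ} (h : n ≤ m) :
    Kseq k n ≤ Kseq k m := by
  induction h with
  | refl => exact le_refl _
  | step h ih => exact le_trans ih (le_of_lt (Kseq_lt_succ h2 _))

lemma occursAt_of_prefix {w l₁ l₂ : List σ} {p : ℕ} (h : occursAt w (l₁ ++ l₂) p)
    (hle : p + w.length ≤ l₁.length) : occursAt w l₁ p := by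
  obtain ⟨h1, h2⟩ := h
  refine ⟨hle, ?_⟩
  rw [List.drop_append, List.take_append] at h2
  have e1 : w.length - (l₁.drop p).length = 0 := by simp; omega
  rw [e1, List.take_zero, List.append_nil] at h2
  exact h2

lemma occursAt_of_suffix {w l₁ l₂ : List σ} {p : ℕ} (h : occursAt w (l₁ ++ l₂) p)
    (hle : l₁.length ≤ p) : occursAt w l₂ (p - l₁.length) := by
  obtain ⟨h1, h2⟩ := h
  constructor
  · simp at h1; omega
  · rw [List.drop_append, List.drop_eq_nil_of_le hle, List.nil_append] at h2
    exact h2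

lemma flat_block {S : Set (List σ)} {K : ℕ} (hK : 0 < K) (hlen : ∀ u ∈ S, u.length = K) :
    ∀ (g : List (List σ)), (∀ u ∈ g, u ∈ S) → ∀ t, (t+1)*K ≤ g.flatten.length →
    (g.flatten.drop (t*K)).take K ∈ S := by
  intro g
  induction g with
  | nil => intro _ t ht; simp at ht; omega
  | cons u g ih =>
    intro hmem t ht
    have hu : u ∈ S := hmem u (by simp)
    have hul : u.length = K := hlen u hu
    rw [List.flatten_cons]
    cases t with
    | zero =>
      rw [Nat.zero_mul, List.drop_zero, List.take_append, hul,
        List.take_of_length_le (le_of_eq hul), Nat.sub_self, List.take_zero, List.append_nil]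
      exact hu
    | succ s =>
      rw [List.drop_append, List.drop_eq_nil_of_le (by rw [hul]; nlinarith),
        List.nil_append]
      have e : (s+1)*K - u.length = s * K := by rw [hul]; ring_nf; omega
      rw [e]
      apply ih (fun v hv => hmem v (by simp [hv])) s
      have : (s+1+1)*K = K + (s+1)*K := by ring
      simp [List.flatten_cons] at ht
      rw [this] at ht
      simp at ht ⊢
      omega

lemma occ_flat_dvd {S : Set (List σ)} {K : ℕ} (hK : 0 < K) (hlen : ∀ u ∈ S, u.length = K)
    (hur : ∀ u ∈ S, ∀ v ∈ S, ∀ w ∈ S, ∀ p, occursAt w (u ++ v) p → p = 0 ∨ p = K) :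
    ∀ (g : List (List σ)), (∀ u ∈ g, u ∈ S) → ∀ w ∈ S, ∀ p, occursAt w g.flatten p → K ∣ p := by
  intro g
  induction g with
  | nil =>
    intro _ w hw p hp
    obtain ⟨h1, _⟩ := hp
    rw [hlen w hw] at h1
    simp at h1; omega
  | cons u g ih =>
    intro hmem w hw p hp
    have hu : u ∈ S := hmem u (by simp)
    have hul : u.length = K := hlen u hu
    have hwl : w.length = K := hlen w hw
    rw [List.flatten_cons] at hp
    rcases Nat.lt_or_ge p K with hpK | hpK
    · rcases Nat.eq_zero_or_pos p with rfl | hp0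
      · exact Dvd.intro 0 rfl
      · -- 0 < p < K : straddles u and head of g
        cases g with
        | nil =>
          obtain ⟨h1, _⟩ := hp
          simp [hul, hwl] at h1
          omega
        | cons v g' =>
          have hv : v ∈ S := hmem v (by simp)
          have hocc : occursAt w (u ++ v) p := by
            apply occursAt_of_prefix (l₂ := g'.flatten)
            · rw [List.append_assoc]
              simpa using hp
            · simp [hul, hwl, hlen v hv]; omega
          rcases hur u hu v hv w hw p hocc with rfl | rfl
          · omega
          · omega
    · have hocc := occursAt_of_suffix hp (by rw [hul]; exact hpK)
      have := ih (fun v hv => hmem v (by simp [hv])) w hw (p - u.length) hocc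
      rw [hul] at this
      obtain ⟨c, hc⟩ := this
      exact ⟨c + 1, by rw [Nat.mul_add, Nat.mul_one]; omega⟩

end Aux


section Aux2
variable {σ : Type*} [Fintype σ] {k : ℕ → ℕ} {W : ℕ → Set (List σ)}

/-- Every `m`-word is a concatenation of `n`-words, for `n ≤ m`. -/
lemma exists_flat (hW : OdometerBasedCS σ k W) {n m : ℕ} (h : n ≤ m) :
    ∀ w' ∈ W m, ∃ g : List (List σ), (∀ u ∈ g, u ∈ W n) ∧ w' = g.flatten := by
  induction h with
  | refl => intro w' hw'; exact ⟨[w'], by simp [hw'], by simp⟩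
  | @step m hm ih =>
    intro w' hw'
    obtain ⟨g', hg', hflat⟩ := hW.concat m w' hw'
    choose G hG1 hG2 using fun i => ih (g' i) (hg' i)
    refine ⟨(List.ofFn G).flatten, ?_, ?_⟩
    · intro u hu
      rw [List.mem_flatten] at hu
      obtain ⟨l, hl, hul⟩ := hu
      rw [List.mem_ofFn] at hl
      obtain ⟨i, rfl⟩ := hl
      exact hG1 i u hul
    · rw [List.flatten_flatten, List.map_ofFn, hflat]
      congr 1
      have : g' = fun i => (G i).flatten := funext hG2
      rw [this]
      rfl

/-- `x` parses into `n`-words with offset `a`. -/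
def AllParsed (W : ℕ → Set (List σ)) (k : ℕ → ℕ) (n : ℕ) (a : ℤ) (x : ℤ → σ) : Prop :=
  ∀ j : ℤ, subwordAt x (a + j * (Kseq k n : ℤ)) (Kseq k n) ∈ W n

lemma shiftZ_shiftZ (a b : ℤ) (x : ℤ → σ) : shiftZ a (shiftZ b x) = shiftZ (a + b) x := by
  funext m; simp [shiftZ]; ring_nf

@[simp] lemma shiftZ_zero (x : ℤ → σ) : shiftZ 0 x = x := by funext m; simp [shiftZ]

lemma allParsed_shiftZ_iff {n : ℕ} {a c : ℤ} {x : ℤ → σ} :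
    AllParsed W k n a (shiftZ c x) ↔ AllParsed W k n (a + c) x := by
  constructor <;> intro h j <;> have hj := h j
  · rw [subword_shiftZ] at hj
    convert hj using 2; ring
  · rw [subword_shiftZ]
    convert hj using 2; ring

lemma allParsed_add_mul {n : ℕ} {a c : ℤ} {x : ℤ → σ}
    (h : AllParsed W k n a x) : AllParsed W k n (a + c * (Kseq k n : ℤ)) x := by
  intro j
  have := h (c + j)
  convert this using 2
  ring

/-- Uniqueness of the parsing offset within a window of width `K_n`. -/
lemma win_eq_aux (hW : OdometerBasedCS σ k W) {n : ℕ} {x : ℤ → σ} {a a' : ℤ}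
    (hle : a ≤ a') (hlt : a' < a + (Kseq k n : ℤ))
    (h : ∀ j : ℤ, 0 ≤ j → j < 2 → subwordAt x (a + j * (Kseq k n : ℤ)) (Kseq k n) ∈ W n)
    (h' : subwordAt x a' (Kseq k n) ∈ W n) : a' = a := by
  set K := Kseq k n with hK
  have hKpos := Kseq_pos hW.two_le n
  have hu₁ : subwordAt x a K ∈ W n := by have := h 0 le_rfl (by norm_num); simpa using this
  have hu₂ : subwordAt x (a + (K : ℤ)) K ∈ W n := by
    have := h 1 zero_le_one (by norm_num); simpa using this
  set d : ℕ := (a' - a).toNat with hd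
  have hda : a' = a + (d : ℤ) := by omega
  have happ : subwordAt x a (K + K) = subwordAt x a K ++ subwordAt x (a + (K : ℤ)) K := by
    have := subword_append x a K K
    simpa using this
  have hocc : occursAt (subwordAt x (a + (d : ℤ)) K) (subwordAt x a (K + K)) d := by
    have := occursAt_subword x a (K + K) d K (by omega)
    simpa using this
  rw [← hda, happ] at hocc
  rcases hW.unique_readable n _ hu₁ _ hu₂ _ h' d hocc with h0 | hKd
  · omega
  · omega

lemma win_eq (hW : OdometerBasedCS σ k W) {n : ℕ} {x : ℤ → σ} {a a' : ℤ}
    (ha1 : -((Kseq k n : ℕ) : ℤ) < a) (ha2 : a ≤ 0)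
    (ha1' : -((Kseq k n : ℕ) : ℤ) < a') (ha2' : a' ≤ 0)
    (h : ∀ j : ℤ, -2 ≤ j → j < 2 → subwordAt x (a + j * (Kseq k n : ℤ)) (Kseq k n) ∈ W n)
    (h' : ∀ j : ℤ, -2 ≤ j → j < 2 → subwordAt x (a' + j * (Kseq k n : ℤ)) (Kseq k n) ∈ W n) :
    a = a' := by
  rcases le_total a a' with hle | hle
  · refine (win_eq_aux hW hle (by omega) (fun j hj1 hj2 => h j (by omega) hj2) ?_).symm
    have := h' 0 (by norm_num) (by norm_num); simpa using this
  · refine win_eq_aux hW hle (by omega) (fun j hj1 hj2 => h' j (by omega) hj2) ?_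
    have := h 0 (by norm_num) (by norm_num); simpa using this

/-- Windowed parsing existence. -/
lemma window_parsed (hW : OdometerBasedCS σ k W) {x : ℤ → σ} (hx : x ∈ CSLimit W)
    (n : ℕ) (N : ℕ) :
    ∃ a : ℤ, -((Kseq k n : ℕ) : ℤ) < a ∧ a ≤ 0 ∧
      ∀ j : ℤ, -(N : ℤ) ≤ j → j < N → subwordAt x (a + j * (Kseq k n : ℤ)) (Kseq k n) ∈ W n := by
  classical
  have hKpos := Kseq_pos hW.two_le n
  set K := Kseq k n with hKdef
  set M : ℕ := (2 * N + 4) * K with hMdef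
  set a₀ : ℤ := -((N : ℤ) + 2) * K with ha₀
  have hMz : (M : ℤ) = (2 * (N : ℤ) + 4) * K := by rw [hMdef]; push_cast; ring
  obtain ⟨n', w'', hw'', p, hocc⟩ := hx a₀ M
  have hlenw : w''.length = Kseq k n' := hW.length_eq n' w'' hw''
  have hMw : p + M ≤ w''.length := by
    have := hocc.1
    rwa [subword_length] at this
  have hnn' : n ≤ n' := by
    by_contra hcon
    push_neg at hcon
    have h1 : Kseq k n' ≤ K := Kseq_mono hW.two_le (by omega)
    have h2 : 4 * K ≤ M := by rw [hMdef]; nlinarith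
    omega
  obtain ⟨g, hg, hgf⟩ := exists_flat hW hnn' w'' hw''
  -- the key claim: aligned blocks inside the window are `n`-words
  have claim : ∀ t r : ℕ, r + p = t * K → t * K + K ≤ p + M →
      subwordAt x (a₀ + (r : ℤ)) K ∈ W n := by
    intro t r hr ht
    have hrKM : r + K ≤ M := by omega
    have hblock : (w''.drop (t * K)).take K ∈ W n := by
      rw [hgf]
      refine flat_block hKpos (fun u hu => hW.length_eq n u hu) g hg t ?_
      rw [← hgf]
      have : (t + 1) * K = t * K + K := by ring
      omega
    have heq : subwordAt x (a₀ + (r : ℤ)) K = (w''.drop (t * K)).take K := by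
      have hsub : ((subwordAt x a₀ M).drop r).take K = subwordAt x (a₀ + (r : ℤ)) K := by
        apply subword_drop_take
        omega
      have hw2 : (w''.drop p).take M = subwordAt x a₀ M := by
        have := hocc.2
        rwa [subword_length] at this
      rw [← hsub, ← hw2]
      rw [List.drop_take, List.take_take, List.drop_drop]
      have e2 : min K (M - r) = K := by omega
      rw [e2]
      have e3 : p + r = t * K := by omega
      rw [e3]
    rw [heq]
    exact hblock
  -- the starting block index
  have key : ∀ q : ℕ, ∃ t r : ℕ, r + q = t * K ∧ r < K := by
    intro q
    induction q with
    | zero => exact ⟨0, 0, by simp, hKpos⟩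
    | succ q ih =>
      obtain ⟨t, r, h1, h2⟩ := ih
      rcases Nat.eq_zero_or_pos r with rfl | hr
      · refine ⟨t + 1, K - 1, ?_, by omega⟩
        have : (t + 1) * K = t * K + K := by ring
        omega
      · exact ⟨t, r - 1, by omega, by omega⟩
  obtain ⟨t₀, r₀, hr₀, hr₀K⟩ := key p
  set b : ℤ := a₀ + (r₀ : ℤ) with hb
  have hbub : b ≤ -((N : ℤ) + 1) * K - 1 := by
    rw [hb, ha₀]
    have h' : (r₀ : ℤ) + 1 ≤ (K : ℤ) := by exact_mod_cast hr₀K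
    linarith
  -- claim restated for arbitrary aligned positions
  have claim2 : ∀ z : ℤ, ((K : ℕ) : ℤ) ∣ (z - b) → b ≤ z → z + (K : ℤ) ≤ a₀ + M →
      subwordAt x z K ∈ W n := by
    intro z hdvd hbz hzM
    obtain ⟨c, hc⟩ := hdvd
    have hKz : (0 : ℤ) < (K : ℤ) := by exact_mod_cast hKpos
    have hc0 : 0 ≤ c := by nlinarith
    set s : ℕ := c.toNat with hs
    have hcs : (s : ℤ) = c := Int.toNat_of_nonneg hc0
    have hzb : z = b + (K : ℤ) * s := by rw [hcs]; omega
    have hz : z = a₀ + ((r₀ + s * K : ℕ) : ℤ) := by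
      rw [hzb, hb]; push_cast; ring
    rw [hz]
    apply claim (t₀ + s)
    · have : (t₀ + s) * K = t₀ * K + s * K := by ring
      omega
    · -- (t₀ + s) * K + K ≤ p + M
      have hz2 : (r₀ : ℤ) + (s : ℤ) * K + K ≤ (M : ℤ) := by
        rw [hzb, hb] at hzM
        push_cast at hzM ⊢
        linarith
      have hz2n : r₀ + s * K + K ≤ M := by exact_mod_cast hz2
      have : (t₀ + s) * K = t₀ * K + s * K := by ring
      omega
  -- now pick the offset a in (-K, 0]
  set a : ℤ := -((-b) % K) with ha
  have hKz : (0 : ℤ) < (K : ℤ) := by exact_mod_cast hKpos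
  have hmod1 : 0 ≤ (-b) % (K : ℤ) := Int.emod_nonneg _ (by omega)
  have hmod2 : (-b) % (K : ℤ) < K := Int.emod_lt_of_pos _ hKz
  have hab : a - b = (K : ℤ) * ((-b) / K) := by
    rw [ha]
    have := Int.emod_add_mul_ediv (-b) (K : ℤ)
    linarith
  refine ⟨a, by omega, by omega, ?_⟩
  intro j hj1 hj2
  have hjl : (-(N : ℤ)) * K ≤ j * K := mul_le_mul_of_nonneg_right hj1 (by positivity)
  have hju : j * K ≤ ((N : ℤ) - 1) * K :=
    mul_le_mul_of_nonneg_right (by omega) (by positivity)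
  apply claim2
  · exact ⟨(-b) / K + j, by linear_combination hab⟩
  · nlinarith
  · nlinarith


/-- Every point of the limit has a parsing offset at every level. -/
lemma exists_parsed (hW : OdometerBasedCS σ k W) {x : ℤ → σ} (hx : x ∈ CSLimit W) (n : ℕ) :
    ∃ a : ℤ, -((Kseq k n : ℕ) : ℤ) < a ∧ a ≤ 0 ∧ AllParsed W k n a x := by
  choose F h1 h2 h3 using window_parsed hW hx n
  refine ⟨F 2, h1 2, h2 2, ?_⟩
  intro j
  set N : ℕ := j.natAbs + 3 with hN
  have hFN : F N = F 2 := by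
    refine win_eq (x := x) hW (h1 N) (h2 N) (h1 2) (h2 2) ?_ ?_
    · intro i hi1 hi2
      exact h3 N i (by omega) (by omega)
    · intro i hi1 hi2
      exact h3 2 i (by omega) (by omega)
  rw [← hFN]
  exact h3 N j (by omega) (by omega)

/-- Any two parsing offsets at the same level are congruent mod `K_n`. -/
lemma parsed_dvd (hW : OdometerBasedCS σ k W) {n : ℕ} {a a' : ℤ} {x : ℤ → σ}
    (h : AllParsed W k n a x) (h' : AllParsed W k n a' x) :
    ((Kseq k n : ℕ) : ℤ) ∣ (a' - a) := by
  have hKpos := Kseq_pos hW.two_le n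
  have hKz : (0 : ℤ) < ((Kseq k n : ℕ) : ℤ) := by exact_mod_cast hKpos
  set c : ℤ := (a - a') / ((Kseq k n : ℕ) : ℤ) with hc
  have h'' : AllParsed W k n (a' + c * ((Kseq k n : ℕ) : ℤ)) x := allParsed_add_mul h'
  set b : ℤ := a' + c * ((Kseq k n : ℕ) : ℤ) with hb
  have hmod : a - b = (a - a') % ((Kseq k n : ℕ) : ℤ) := by
    rw [hb, hc, Int.emod_def]
    ring
  have hm1 : 0 ≤ (a - a') % ((Kseq k n : ℕ) : ℤ) := Int.emod_nonneg _ (by omega)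
  have hm2 : (a - a') % ((Kseq k n : ℕ) : ℤ) < (Kseq k n : ℤ) := Int.emod_lt_of_pos _ hKz
  have hba1 : b ≤ a := by linarith
  have hba2 : a < b + ((Kseq k n : ℕ) : ℤ) := by linarith
  have hba : a = b := by
    refine win_eq_aux hW hba1 hba2 (fun i _ _ => h'' i) ?_
    have := h 0
    simpa using this
  have heq : a - a' = c * ((Kseq k n : ℕ) : ℤ) := by rw [hba, hb]; ring
  exact ⟨-c, by linear_combination -heq⟩

/-- A level-`(n+1)` parsing refines to a level-`n` parsing with the same offset. -/
lemma parsed_refine (hW : OdometerBasedCS σ k W) {n : ℕ} {a : ℤ} {x : ℤ → σ}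
    (h : AllParsed W k (n + 1) a x) : AllParsed W k n a x := by
  intro j
  have hKpos := Kseq_pos hW.two_le n
  have hkn := hW.two_le n
  have hkz : (0 : ℤ) < ((k n : ℕ) : ℤ) := by exact_mod_cast (by omega : 0 < k n)
  set q : ℤ := j / (k n : ℤ) with hq
  set t : ℕ := (j % (k n : ℤ)).toNat with ht
  have hmod1 : 0 ≤ j % (k n : ℤ) := Int.emod_nonneg _ (by omega)
  have hmod2 : j % (k n : ℤ) < (k n : ℤ) := Int.emod_lt_of_pos _ hkz
  have htz : (t : ℤ) = j % (k n : ℤ) := Int.toNat_of_nonneg hmod1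
  have htk : t < k n := by omega
  have hB := h q
  obtain ⟨g, hg, hgf⟩ := exists_flat hW (Nat.le_succ n) _ hB
  have hKK : Kseq k (n + 1) = Kseq k n * k n := Kseq_succ k n
  have hblock : ((subwordAt x (a + q * (Kseq k (n + 1) : ℤ)) (Kseq k (n + 1))).drop
      (t * Kseq k n)).take (Kseq k n) ∈ W n := by
    rw [hgf]
    refine flat_block hKpos (fun u hu => hW.length_eq n u hu) g hg t ?_
    rw [← hgf, subword_length, hKK]
    calc (t + 1) * Kseq k n ≤ k n * Kseq k n := Nat.mul_le_mul_right _ (by omega)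
    _ = Kseq k n * k n := Nat.mul_comm _ _
  have hle2 : t * Kseq k n + Kseq k n ≤ Kseq k (n + 1) := by
    rw [hKK]
    calc t * Kseq k n + Kseq k n = (t + 1) * Kseq k n := by ring
    _ ≤ k n * Kseq k n := Nat.mul_le_mul_right _ (by omega)
    _ = Kseq k n * k n := Nat.mul_comm _ _
  rw [subword_drop_take x _ _ _ _ hle2] at hblock
  have hjq : ((k n : ℕ) : ℤ) * q + (t : ℤ) = j := by
    rw [htz, hq]; exact Int.mul_ediv_add_emod j _
  have hoff : a + j * ((Kseq k n : ℕ) : ℤ) =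
      a + q * ((Kseq k (n + 1) : ℕ) : ℤ) + ((t * Kseq k n : ℕ) : ℤ) := by
    have hKKz : ((Kseq k (n + 1) : ℕ) : ℤ) = (Kseq k n : ℤ) * (k n : ℤ) := by
      rw [hKK]; push_cast; ring
    rw [hKKz]
    push_cast
    linear_combination ((Kseq k n : ℕ) : ℤ) * hjq.symm
  rw [hoff]
  exact hblock

end Aux2


section Meas
open ENNReal
variable {α : Type} [Fintype α] [MeasurableSpace α] [DiscreteMeasurableSpace α]
  {k : ℕ → ℕ} {W : ℕ → Set (List α)}

lemma measurable_subword_mem (a : ℤ) (m : ℕ) (S : Set (List α)) :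
    MeasurableSet {x : ℤ → α | subwordAt x a m ∈ S} := by
  have he : {x : ℤ → α | subwordAt x a m ∈ S}
      = (fun (x : ℤ → α) (i : Fin m) => x (a + i)) ⁻¹' {v | List.ofFn v ∈ S} := rfl
  rw [he]
  exact (measurable_pi_lambda _ (fun i => measurable_pi_apply _))
    (Set.Finite.measurableSet (Set.toFinite _))

lemma measurable_CSLimit : MeasurableSet (CSLimit W) := by
  have he : CSLimit W = ⋂ (a : ℤ), ⋂ (m : ℕ),
      {x : ℤ → α | subwordAt x a m ∈ {u | ∃ n, ∃ w ∈ W n, ∃ p, occursAt u w p}} := by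
    ext x
    simp only [CSLimit, Set.mem_iInter, Set.mem_setOf_eq]
  rw [he]
  exact MeasurableSet.iInter fun a => MeasurableSet.iInter fun m => measurable_subword_mem _ _ _

/-- The set of points whose level-`n` parsing has offset `0`. -/
def parsedSet (W : ℕ → Set (List α)) (k : ℕ → ℕ) (n : ℕ) : Set (ℤ → α) :=
  {x | x ∈ CSLimit W ∧ ∀ j : ℤ, subwordAt x (j * (Kseq k n : ℤ)) (Kseq k n) ∈ W n}

lemma measurable_parsedSet (n : ℕ) : MeasurableSet (parsedSet W k n) := by
  have he : parsedSet W k n = CSLimit W ∩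
      ⋂ (j : ℤ), {x : ℤ → α | subwordAt x (j * (Kseq k n : ℤ)) (Kseq k n) ∈ W n} := by
    ext x
    simp only [parsedSet, Set.mem_inter_iff, Set.mem_iInter, Set.mem_setOf_eq]
  rw [he]
  exact measurable_CSLimit.inter (MeasurableSet.iInter fun j => measurable_subword_mem _ _ _)

lemma measurable_cylinder (n : ℕ) (w : List α) : MeasurableSet (cylinder W k n w) := by
  have he : cylinder W k n w = parsedSet W k n ∩
      {x : ℤ → α | subwordAt x 0 (Kseq k n) ∈ ({w} : Set (List α))} := by
    ext x
    simp only [cylinder, parsedSet, Set.mem_inter_iff, Set.mem_setOf_eq,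
      Set.mem_singleton_iff]
    tauto
  rw [he]
  exact (measurable_parsedSet n).inter (measurable_subword_mem _ _ _)

lemma measurable_shiftZ (c : ℤ) : Measurable (shiftZ c : (ℤ → α) → (ℤ → α)) :=
  measurable_pi_lambda _ fun m => measurable_pi_apply _

lemma allParsed_zero_iff {n : ℕ} {x : ℤ → α} :
    AllParsed W k n 0 x ↔ ∀ j : ℤ, subwordAt x (j * (Kseq k n : ℤ)) (Kseq k n) ∈ W n := by
  simp only [AllParsed, zero_add]

lemma CSLimit_shiftZ {x : ℤ → α} (hx : x ∈ CSLimit W) (c : ℤ) : shiftZ c x ∈ CSLimit W := by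
  intro a m
  rw [subword_shiftZ]
  exact hx (a + c) m

lemma shiftZ_cancel (c : ℤ) (x : ℤ → α) : shiftZ c (shiftZ (-c) x) = x := by
  rw [shiftZ_shiftZ]
  simp

variable (ρ : Measure (ℤ → α)) [IsProbabilityMeasure ρ]

lemma map_shiftZ (hinv : Measure.map shift ρ = ρ) (c : ℤ) : Measure.map (shiftZ c) ρ = ρ := by
  have hsh : (shift : (ℤ → α) → (ℤ → α)) = shiftZ 1 := rfl
  have hcomp : ∀ a b : ℤ, (shiftZ a : (ℤ → α) → _) ∘ shiftZ b = shiftZ (a + b) :=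
    fun a b => funext (shiftZ_shiftZ a b)
  have hnat : ∀ c : ℕ, Measure.map (shiftZ (c : ℤ)) ρ = ρ := by
    intro c
    induction c with
    | zero =>
      have : (shiftZ (0 : ℤ) : (ℤ → α) → _) = id := funext shiftZ_zero
      simp [this]
    | succ c ih =>
      have h1 : Measure.map (shiftZ ((c : ℤ) + 1)) ρ
          = Measure.map (shiftZ (c : ℤ)) (Measure.map (shiftZ 1) ρ) := by
        rw [Measure.map_map (measurable_shiftZ _) (measurable_shiftZ _), hcomp]
      rw [show ((c + 1 : ℕ) : ℤ) = (c : ℤ) + 1 by push_cast; ring, h1, ← hsh, hinv, ih]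
  rcases le_or_gt 0 c with hc | hc
  · have : c = ((c.toNat : ℕ) : ℤ) := by omega
    rw [this]
    exact hnat c.toNat
  · have h1 := hnat (-c).toNat
    calc Measure.map (shiftZ c) ρ = Measure.map (shiftZ c) (Measure.map (shiftZ ((-c).toNat : ℤ)) ρ) := by rw [h1]
    _ = Measure.map (shiftZ c ∘ shiftZ ((-c).toNat : ℤ)) ρ :=
        (Measure.map_map (measurable_shiftZ _) (measurable_shiftZ _))
    _ = Measure.map (shiftZ (c + ((-c).toNat : ℤ))) ρ := by rw [hcomp]
    _ = ρ := by
        have he : c + ((-c).toNat : ℤ) = 0 := by omega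
        have hid : (shiftZ (0 : ℤ) : (ℤ → α) → _) = id := funext shiftZ_zero
        rw [he, hid, Measure.map_id]

lemma measure_shiftZ_preimage (hinv : Measure.map shift ρ = ρ) (c : ℤ) {A : Set (ℤ → α)}
    (hA : MeasurableSet A) : ρ (shiftZ c ⁻¹' A) = ρ A := by
  conv_rhs => rw [← map_shiftZ ρ hinv c]
  rw [Measure.map_apply (measurable_shiftZ c) hA]

/-- The basic partition: `K_n` shifted copies of `parsedSet n` tile the limit set. -/
lemma parsedSet_mul (hW : OdometerBasedCS α k W) (hinv : Measure.map shift ρ = ρ)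
    (hsupp : ρ (CSLimit W) = 1) (n : ℕ) :
    ((Kseq k n : ℕ) : ℝ≥0∞) * ρ (parsedSet W k n) = 1 := by
  have hKpos := Kseq_pos hW.two_le n
  have hcover : CSLimit W = ⋃ i ∈ Finset.range (Kseq k n),
      shiftZ (i : ℤ) ⁻¹' parsedSet W k n := by
    ext x
    constructor
    · intro hx
      obtain ⟨a, ha1, ha2, hA⟩ := exists_parsed hW hx n
      have hmem : ∀ i : ℕ, (i : ℤ) < Kseq k n → AllParsed W k n (i : ℤ) x →
          x ∈ ⋃ i ∈ Finset.range (Kseq k n), shiftZ (i : ℤ) ⁻¹' parsedSet W k n := by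
        intro i hi hAi
        have hi' : i ∈ Finset.range (Kseq k n) := Finset.mem_range.mpr (by omega)
        refine Set.mem_biUnion hi' ?_
        refine ⟨CSLimit_shiftZ hx _, ?_⟩
        refine allParsed_zero_iff.mp ?_
        rw [allParsed_shiftZ_iff, zero_add]
        exact hAi
      rcases eq_or_lt_of_le ha2 with hz | hz
      · exact hmem 0 (by exact_mod_cast hKpos) (by rw [Int.ofNat_zero, ← hz]; exact hA)
      · have hA' : AllParsed W k n (a + 1 * ((Kseq k n : ℕ) : ℤ)) x := allParsed_add_mul hA
        refine hmem (a + Kseq k n).toNat (by omega) ?_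
        have he : ((a + Kseq k n).toNat : ℤ) = a + 1 * ((Kseq k n : ℕ) : ℤ) := by omega
        rw [he]
        exact hA'
    · intro hx
      simp only [Set.mem_iUnion] at hx
      obtain ⟨i, _, hxi⟩ := hx
      have := hxi.1
      have hxx := CSLimit_shiftZ this (-(i : ℤ))
      rwa [shiftZ_shiftZ, neg_add_cancel, shiftZ_zero] at hxx
  have hdisj : (Finset.range (Kseq k n) : Set ℕ).PairwiseDisjoint
      (fun i : ℕ => shiftZ (i : ℤ) ⁻¹' parsedSet W k n) := by
    intro i hi j hj hne
    simp only [Finset.coe_range, Set.mem_Iio] at hi hj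
    refine Set.disjoint_left.mpr fun x hxi hxj => hne ?_
    have hai : AllParsed W k n (i : ℤ) x := by
      have := allParsed_zero_iff.mpr hxi.2
      rw [allParsed_shiftZ_iff, zero_add] at this
      exact this
    have haj : AllParsed W k n (j : ℤ) x := by
      have := allParsed_zero_iff.mpr hxj.2
      rw [allParsed_shiftZ_iff, zero_add] at this
      exact this
    have hdvd := parsed_dvd hW hai haj
    obtain ⟨c, hc⟩ := hdvd
    have : (i : ℤ) = j := by
      rcases le_or_gt c 0 with h | h
      · have : ((Kseq k n : ℕ) : ℤ) * c ≤ ((Kseq k n : ℕ) : ℤ) * 0 :=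
          mul_le_mul_of_nonneg_left h (by positivity)
        rcases eq_or_lt_of_le h with rfl | h'
        · omega
        · have : ((Kseq k n : ℕ) : ℤ) * c ≤ -(Kseq k n : ℤ) := by nlinarith
          omega
      · have : ((Kseq k n : ℕ) : ℤ) ≤ ((Kseq k n : ℕ) : ℤ) * c := by nlinarith
        omega
    omega
  have hmeas : ∀ i : ℕ, MeasurableSet (shiftZ (i : ℤ) ⁻¹' parsedSet W k n) :=
    fun i => measurable_shiftZ _ (measurable_parsedSet n)
  have hsum : ρ (⋃ i ∈ Finset.range (Kseq k n), shiftZ (i : ℤ) ⁻¹' parsedSet W k n)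
      = ∑ i ∈ Finset.range (Kseq k n), ρ (shiftZ (i : ℤ) ⁻¹' parsedSet W k n) :=
    measure_biUnion_finset hdisj (fun i _ => hmeas i)
  rw [← hcover, hsupp] at hsum
  have hterm : ∀ i ∈ Finset.range (Kseq k n),
      ρ (shiftZ (i : ℤ) ⁻¹' parsedSet W k n) = ρ (parsedSet W k n) :=
    fun i _ => measure_shiftZ_preimage ρ hinv _ (measurable_parsedSet n)
  rw [Finset.sum_congr rfl hterm, Finset.sum_const, Finset.card_range, nsmul_eq_mul] at hsum
  exact hsum.symm

lemma dvd_small {K : ℕ} {z : ℤ} (h : ((K : ℕ) : ℤ) ∣ z) (h1 : -(K : ℤ) < z)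
    (h2 : z < (K : ℤ)) : z = 0 := by
  obtain ⟨c, rfl⟩ := h
  rcases lt_trichotomy c 0 with hc | rfl | hc
  · nlinarith
  · ring
  · nlinarith

/-- The cylinders of level-`n` words tile `parsedSet n`. -/
lemma tsum_cylinder (hW : OdometerBasedCS α k W) (n : ℕ) :
    ∑' (w' : {u : List α // u ∈ W n}), ρ (cylinder W k n w'.1) = ρ (parsedSet W k n) := by
  haveI : Countable {u : List α // u ∈ W n} := (hW.finite n).countable.to_subtype
  have hun : parsedSet W k n = ⋃ (w' : {u : List α // u ∈ W n}), cylinder W k n w'.1 := by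
    ext x
    constructor
    · intro hx
      have h0 := hx.2 0
      rw [zero_mul] at h0
      exact Set.mem_iUnion.mpr ⟨⟨_, h0⟩, ⟨hx.1, hx.2, rfl⟩⟩
    · intro hx
      obtain ⟨w', hw'⟩ := Set.mem_iUnion.mp hx
      exact ⟨hw'.1, hw'.2.1⟩
  have hdisj : Pairwise (Function.onFun Disjoint
      fun (w' : {u : List α // u ∈ W n}) => cylinder W k n w'.1) := by
    intro u v huv
    refine Set.disjoint_left.mpr fun x hxu hxv => huv ?_
    refine Subtype.ext ?_
    rw [← hxu.2.2, ← hxv.2.2]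
  rw [hun, measure_iUnion hdisj (fun w' => measurable_cylinder n w'.1)]

/-- The decomposition of an `n`-cylinder into shifted `(n+1)`-cylinders. -/
lemma cylinder_tsum (hW : OdometerBasedCS α k W) (hinv : Measure.map shift ρ = ρ)
    (n : ℕ) (w : List α) (hw : w ∈ W n) :
    ρ (cylinder W k n w) = ∑' (w' : {u : List α // u ∈ W (n + 1)}),
      (occCount w w'.1 : ℝ≥0∞) * ρ (cylinder W k (n + 1) w'.1) := by
  classical
  haveI : Countable {u : List α // u ∈ W (n + 1)} := (hW.finite (n + 1)).countable.to_subtype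
  have hKpos := Kseq_pos hW.two_le n
  have hK'pos := Kseq_pos hW.two_le (n + 1)
  have hwl : w.length = Kseq k n := hW.length_eq n w hw
  have hKK : Kseq k (n + 1) = Kseq k n * k n := Kseq_succ k n
  -- occurrences always satisfy p + K_n ≤ K_{n+1}, and parsing facts
  have hfacts : ∀ (w' : List α), w' ∈ W (n + 1) → ∀ p : ℕ, occursAt w w' p →
      ∀ x : ℤ → α, shiftZ (-(p : ℤ)) x ∈ cylinder W k (n + 1) w' →
      AllParsed W k (n + 1) (-(p : ℤ)) x ∧ subwordAt x (-(p : ℤ)) (Kseq k (n + 1)) = w' := by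
    intro w' hw' p hocc x hx
    constructor
    · have h := allParsed_zero_iff.mpr hx.2.1
      rw [allParsed_shiftZ_iff, zero_add] at h
      exact h
    · have h := hx.2.2
      rwa [subword_shiftZ, zero_add] at h
  -- the index type
  have hdecomp : cylinder W k n w = ⋃ (q : (w' : {u : List α // u ∈ W (n + 1)}) ×
      {p : ℕ // occursAt w w'.1 p}), shiftZ (-(q.2.1 : ℤ)) ⁻¹' cylinder W k (n + 1) q.1.1 := by
    ext x
    constructor
    · rintro ⟨hxL, hxP, hxw⟩
      have h0 : AllParsed W k n 0 x := allParsed_zero_iff.mpr hxP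
      obtain ⟨a, ha1, ha2, hA⟩ := exists_parsed hW hxL (n + 1)
      have hAn := parsed_refine hW hA
      obtain ⟨c, hc⟩ := parsed_dvd hW hAn h0
      set p : ℕ := (-a).toNat with hp
      have hpz : (p : ℤ) = -a := by omega
      have hpK' : (p : ℤ) < (Kseq k (n + 1) : ℤ) := by omega
      have hdvn : Kseq k n ∣ p := by
        have hz : ((Kseq k n : ℕ) : ℤ) ∣ (p : ℤ) := ⟨c, by omega⟩
        exact_mod_cast hz
      obtain ⟨d, hd⟩ := hdvn
      have hdlt : d < k n := by
        apply Nat.lt_of_mul_lt_mul_left (a := Kseq k n)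
        rw [← hd, ← hKK]
        exact_mod_cast hpK'
      have hpleq : p + Kseq k n ≤ Kseq k (n + 1) := by
        rw [hd, hKK]
        calc Kseq k n * d + Kseq k n = Kseq k n * (d + 1) := by ring
        _ ≤ Kseq k n * k n := Nat.mul_le_mul_left _ (by omega)
      have hw' : subwordAt x a (Kseq k (n + 1)) ∈ W (n + 1) := by
        have := hA 0
        simpa using this
      have hocc : occursAt w (subwordAt x a (Kseq k (n + 1))) p := by
        have h := occursAt_subword x a (Kseq k (n + 1)) p (Kseq k n) hpleq
        rw [show a + (p : ℤ) = 0 by omega, hxw] at h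
        exact h
      refine Set.mem_iUnion.mpr ⟨⟨⟨_, hw'⟩, ⟨p, hocc⟩⟩, ?_⟩
      show shiftZ (-(p : ℤ)) x ∈ cylinder W k (n + 1) _
      refine ⟨CSLimit_shiftZ hxL _, ?_, ?_⟩
      · intro j
        rw [subword_shiftZ]
        have h := hA j
        convert h using 2
        omega
      · rw [subword_shiftZ, zero_add, show -(p : ℤ) = a by omega]
    · intro hx
      obtain ⟨⟨⟨w', hw'⟩, ⟨p, hocc⟩⟩, hq⟩ := Set.mem_iUnion.mp hx
      simp only at hq
      obtain ⟨hA, hxw'⟩ := hfacts w' hw' p hocc x hq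
      have hAn := parsed_refine hW hA
      have hw'l : w'.length = Kseq k (n + 1) := hW.length_eq (n + 1) w' hw'
      have hpK : p + Kseq k n ≤ Kseq k (n + 1) := by
        have h := hocc.1
        rw [hwl, hw'l] at h
        exact h
      obtain ⟨g, hg, hgf⟩ := exists_flat hW (Nat.le_succ n) w' hw'
      have hdvd : Kseq k n ∣ p := by
        refine occ_flat_dvd hKpos (fun u hu => hW.length_eq n u hu)
          (fun u hu v hv ww hww pp hpp => hW.unique_readable n u hu v hv ww hww pp hpp)
          g hg w hw p ?_
        rw [← hgf]
        exact hocc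
      obtain ⟨d, hd⟩ := hdvd
      have hxL : x ∈ CSLimit W := by
        have h := CSLimit_shiftZ hq.1 (p : ℤ)
        rwa [shiftZ_cancel] at h
      refine ⟨hxL, ?_, ?_⟩
      · refine allParsed_zero_iff.mp ?_
        have h2 : AllParsed W k n (-(p : ℤ) + (d : ℤ) * (Kseq k n : ℤ)) x :=
          allParsed_add_mul hAn
        have he : -(p : ℤ) + (d : ℤ) * (Kseq k n : ℤ) = 0 := by
          have : (p : ℤ) = (Kseq k n : ℤ) * d := by exact_mod_cast hd
          linarith
        rwa [he] at h2
      · have hx0 : subwordAt (shiftZ (-(p : ℤ)) x) (p : ℤ) (Kseq k n)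
            = subwordAt x 0 (Kseq k n) := by
          rw [subword_shiftZ, add_neg_cancel]
        have h4 := subword_drop_take (shiftZ (-(p : ℤ)) x) 0 (Kseq k (n + 1)) p (Kseq k n) hpK
        have hyw : subwordAt (shiftZ (-(p : ℤ)) x) 0 (Kseq k (n + 1)) = w' := hq.2.2
        rw [hyw, zero_add, hx0] at h4
        have h5 := hocc.2
        rw [hwl] at h5
        rw [← h4, h5]
  have hdisj : Pairwise (Function.onFun Disjoint
      fun (q : (w' : {u : List α // u ∈ W (n + 1)}) × {p : ℕ // occursAt w w'.1 p}) =>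
        shiftZ (-(q.2.1 : ℤ)) ⁻¹' cylinder W k (n + 1) q.1.1) := by
    rintro ⟨⟨w1, hw1⟩, ⟨p1, ho1⟩⟩ ⟨⟨w2, hw2⟩, ⟨p2, ho2⟩⟩ hne
    refine Set.disjoint_left.mpr fun x hx1 hx2 => hne ?_
    obtain ⟨hA1, hxw1⟩ := hfacts w1 hw1 p1 ho1 x hx1
    obtain ⟨hA2, hxw2⟩ := hfacts w2 hw2 p2 ho2 x hx2
    have hb1 : (p1 : ℤ) < (Kseq k (n + 1) : ℤ) := by
      have h := ho1.1
      rw [hwl, hW.length_eq (n + 1) w1 hw1] at h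
      omega
    have hb2 : (p2 : ℤ) < (Kseq k (n + 1) : ℤ) := by
      have h := ho2.1
      rw [hwl, hW.length_eq (n + 1) w2 hw2] at h
      omega
    have hdvd := parsed_dvd hW hA1 hA2
    have hz : -(p2 : ℤ) - -(p1 : ℤ) = 0 := dvd_small hdvd (by omega) (by omega)
    have hpp : p1 = p2 := by omega
    subst hpp
    have hww : w1 = w2 := by rw [← hxw1, ← hxw2]
    subst hww
    rfl
  have hmeas : ∀ (q : (w' : {u : List α // u ∈ W (n + 1)}) × {p : ℕ // occursAt w w'.1 p}),
      MeasurableSet (shiftZ (-(q.2.1 : ℤ)) ⁻¹' cylinder W k (n + 1) q.1.1) :=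
    fun q => measurable_shiftZ _ (measurable_cylinder _ _)
  haveI hfin : ∀ (w' : {u : List α // u ∈ W (n + 1)}), Finite {p : ℕ // occursAt w w'.1 p} := by
    intro w'
    refine Set.Finite.to_subtype (Set.Finite.subset (Set.finite_Iic w'.1.length) ?_)
    intro p hp
    have := hp.1
    simp only [Set.mem_Iic]
    omega
  have h1 : ρ (cylinder W k n w) = ∑' (q : (w' : {u : List α // u ∈ W (n + 1)}) ×
      {p : ℕ // occursAt w w'.1 p}), ρ (shiftZ (-(q.2.1 : ℤ)) ⁻¹' cylinder W k (n + 1) q.1.1) := by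
    rw [hdecomp]
    exact measure_iUnion hdisj hmeas
  have h2 : ∑' (q : (w' : {u : List α // u ∈ W (n + 1)}) × {p : ℕ // occursAt w w'.1 p}),
      ρ (shiftZ (-(q.2.1 : ℤ)) ⁻¹' cylinder W k (n + 1) q.1.1)
      = ∑' (w' : {u : List α // u ∈ W (n + 1)}), ∑' (_ : {p : ℕ // occursAt w w'.1 p}),
        ρ (cylinder W k (n + 1) w'.1) := by
    rw [← ENNReal.tsum_sigma]
    congr 1
    funext q
    exact measure_shiftZ_preimage ρ hinv _ (measurable_cylinder _ _)
  have h3 : ∀ (w' : {u : List α // u ∈ W (n + 1)}),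
      ∑' (_ : {p : ℕ // occursAt w w'.1 p}), ρ (cylinder W k (n + 1) w'.1)
      = (occCount w w'.1 : ℝ≥0∞) * ρ (cylinder W k (n + 1) w'.1) := by
    intro w'
    haveI := Fintype.ofFinite {p : ℕ // occursAt w w'.1 p}
    rw [tsum_eq_sum (s := Finset.univ) (by simp), Finset.sum_const, nsmul_eq_mul]
    congr 2
    rw [occCount, Nat.card_eq_fintype_card]
    simp
  rw [h1, h2]
  exact tsum_congr h3

lemma finite_occ (w w' : List α) : Finite {p : ℕ // occursAt w w' p} := by
  refine Set.Finite.to_subtype (Set.Finite.subset (Set.finite_Iic w'.length) ?_)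
  intro p hp
  have := hp.1
  simp only [Set.mem_Iic]
  omega

end Meas

/-- for any shift-invariant Borel probability measure `ρ` on the limit of an
odometer based construction sequence, the cylinder of each `n`-word `w` satisfies
`1/K_{n+1} ≤ ρ(⟨w⟩) ≤ f_n / K_n`. -/
theorem cylinder_measure_bounds
    {α : Type} [Fintype α] [MeasurableSpace α] [DiscreteMeasurableSpace α]
    (k : ℕ → ℕ) (W : ℕ → Set (List α)) (hW : OdometerBasedCS α k W)
    (ρ : Measure (ℤ → α)) (hprob : IsProbabilityMeasure ρ)
    (hinv : Measure.map shift ρ = ρ) (hsupp : ρ (CSLimit W) = 1) :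
    ∀ n : ℕ, ∀ w ∈ W n,
      (1 : ℝ) / (Kseq k (n + 1) : ℝ) ≤ (ρ (cylinder W k n w)).toReal ∧
      (ρ (cylinder W k n w)).toReal ≤ maxFreq k W n / (Kseq k n : ℝ) := by
  intro n w hw
  classical
  haveI : Countable {u : List α // u ∈ W (n + 1)} := (hW.finite (n + 1)).countable.to_subtype
  haveI : Finite {u : List α // u ∈ W (n + 1)} := (hW.finite (n + 1)).to_subtype
  haveI := Fintype.ofFinite {u : List α // u ∈ W (n + 1)}
  have hKpos := Kseq_pos hW.two_le n
  have hK'pos := Kseq_pos hW.two_le (n + 1)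
  have hP' := parsedSet_mul ρ hW hinv hsupp (n + 1)
  have hT := tsum_cylinder ρ hW (n + 1)
  have hC := cylinder_tsum ρ hW hinv n w hw
  rw [tsum_fintype] at hT hC
  have hne : ∀ A : Set (ℤ → α), ρ A ≠ ⊤ := fun A => measure_ne_top ρ A
  have hCreal : (ρ (cylinder W k n w)).toReal
      = ∑ w' : {u : List α // u ∈ W (n + 1)},
        (occCount w w'.1 : ℝ) * (ρ (cylinder W k (n + 1) w'.1)).toReal := by
    rw [hC, ENNReal.toReal_sum (fun a _ => ENNReal.mul_ne_top (ENNReal.natCast_ne_top _) (hne _))]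
    refine Finset.sum_congr rfl fun w' _ => ?_
    rw [ENNReal.toReal_mul]
    simp
  have hTreal : ∑ w' : {u : List α // u ∈ W (n + 1)},
      (ρ (cylinder W k (n + 1) w'.1)).toReal = (ρ (parsedSet W k (n + 1))).toReal := by
    rw [← hT, ENNReal.toReal_sum (fun a _ => hne _)]
  have hPreal : (ρ (parsedSet W k (n + 1))).toReal = 1 / (Kseq k (n + 1) : ℝ) := by
    have hKne0 : ((Kseq k (n + 1) : ℕ) : ENNReal) ≠ 0 := by
      simp only [ne_eq, Nat.cast_eq_zero]
      omega
    have hKnetop : ((Kseq k (n + 1) : ℕ) : ENNReal) ≠ ⊤ := ENNReal.natCast_ne_top _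
    have h := (ENNReal.eq_div_iff hKne0 hKnetop).mpr hP'
    rw [h, ENNReal.toReal_div]
    simp
  constructor
  · -- lower bound
    rw [hCreal, ← hPreal, ← hTreal]
    refine Finset.sum_le_sum fun w' _ => ?_
    have hocc1 : 1 ≤ occCount w w'.1 := by
      haveI := finite_occ w w'.1
      haveI : Nonempty {p : ℕ // occursAt w w'.1 p} := by
        obtain ⟨p, hp⟩ := hW.subword n w hw w'.1 w'.2
        exact ⟨⟨p, hp⟩⟩
      exact Nat.card_pos
    calc (ρ (cylinder W k (n + 1) w'.1)).toReal
        = 1 * (ρ (cylinder W k (n + 1) w'.1)).toReal := (one_mul _).symm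
    _ ≤ (occCount w w'.1 : ℝ) * (ρ (cylinder W k (n + 1) w'.1)).toReal :=
        mul_le_mul_of_nonneg_right (by exact_mod_cast hocc1) ENNReal.toReal_nonneg
  · -- upper bound
    rw [hCreal]
    have hmax : ∀ w' ∈ W (n + 1), (occCount w w' : ℝ)
        ≤ maxFreq k W n * ((Kseq k (n + 1) : ℝ) / (Kseq k n : ℝ)) := by
      intro w' hw'
      have hfr : Freq k n (n + 1) w w' ≤ maxFreq k W n := by
        apply le_csSup
        · have hfin : {r : ℝ | ∃ w ∈ W n, ∃ w' ∈ W (n + 1), r = Freq k n (n + 1) w w'}.Finite := by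
            refine ((hW.finite n).image2 (Freq k n (n + 1)) (hW.finite (n + 1))).subset ?_
            rintro r ⟨w1, hw1, w2, hw2, rfl⟩
            exact Set.mem_image2.mpr ⟨w1, hw1, w2, hw2, rfl⟩
          exact hfin.bddAbove
        · exact ⟨w, hw, w', hw', rfl⟩
      have hpos : (0 : ℝ) < (Kseq k (n + 1) : ℝ) / (Kseq k n : ℝ) := by positivity
      rwa [Freq, div_le_iff₀ hpos] at hfr
    have hsum : ∑ w' : {u : List α // u ∈ W (n + 1)},
        (occCount w w'.1 : ℝ) * (ρ (cylinder W k (n + 1) w'.1)).toReal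
        ≤ ∑ w' : {u : List α // u ∈ W (n + 1)},
          (maxFreq k W n * ((Kseq k (n + 1) : ℝ) / (Kseq k n : ℝ)))
            * (ρ (cylinder W k (n + 1) w'.1)).toReal :=
      Finset.sum_le_sum fun w' _ =>
        mul_le_mul_of_nonneg_right (hmax w'.1 w'.2) ENNReal.toReal_nonneg
    refine le_trans hsum ?_
    rw [← Finset.mul_sum, hTreal, hPreal]
    have hK0 : (Kseq k n : ℝ) ≠ 0 := by positivity
    have hK'0 : (Kseq k (n + 1) : ℝ) ≠ 0 := by positivity
    have hre : maxFreq k W n * ((Kseq k (n + 1) : ℝ) / (Kseq k n : ℝ))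
        * (1 / (Kseq k (n + 1) : ℝ)) = maxFreq k W n / (Kseq k n : ℝ) := by
      field_simp
    rw [hre]

end OdoPaper
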